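/- For any connected graph G with at least two vertices and any integer t ≥ 3, one has dim_l(C_t ⊠ G) ≥ ⌈t/D(G)⌉, where D(G) is the diameter of G and C_t is the cycle on t vertices. -/

import Mathlib

open SimpleGraph

/-- The strong product of two simple graphs. -/
def strongProd {α β : Type*} (G : SimpleGraph α) (H : SimpleGraph β) :
    SimpleGraph (α × β) where
  Adj x y := (x.1 = y.1 ∧ H.Adj x.2 y.2) ∨ (x.2 = y.2 ∧ G.Adj x.1 y.1) ∨
      (G.Adj x.1 y.1 ∧ H.Adj x.2 y.2)
  symm := by
    constructor
    rintro x y (⟨h1, h2⟩ | ⟨h1, h2⟩ | ⟨h1, h2⟩)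
    · exact Or.inl ⟨h1.symm, h2.symm⟩
    · exact Or.inr (Or.inl ⟨h1.symm, h2.symm⟩)
    · exact Or.inr (Or.inr ⟨h1.symm, h2.symm⟩)
  loopless := by
    constructor
    rintro x (⟨_, h⟩ | ⟨_, h⟩ | ⟨h, _⟩)
    · exact H.irrefl h
    · exact G.irrefl h
    · exact G.irrefl h

/-- A set `S` is a local metric generator for `G` if every pair of adjacent
vertices is distinguished by some element of `S`. -/
def IsLocalMetricGenerator {α : Type*} (G : SimpleGraph α) (S : Set α) : Prop :=
  ∀ u v : α, G.Adj u v → ∃ s ∈ S, G.dist u s ≠ G.dist v s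

/-- The local metric dimension of a graph. -/
noncomputable def localMetricDim {α : Type*} [Fintype α] (G : SimpleGraph α) : ℕ :=
  sInf {n | ∃ S : Finset α, S.card = n ∧ IsLocalMetricGenerator G ↑S}

/-- A set `S` is a metric generator for `G` if every pair of distinct
vertices is distinguished by some element of `S`. -/
def IsMetricGenerator {α : Type*} (G : SimpleGraph α) (S : Set α) : Prop :=
  ∀ u v : α, u ≠ v → ∃ s ∈ S, G.dist u s ≠ G.dist v s

/-- The metric dimension of a graph. -/
noncomputable def metricDim {α : Type*} [Fintype α] (G : SimpleGraph α) : ℕ :=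
  sInf {n | ∃ S : Finset α, S.card = n ∧ IsMetricGenerator G ↑S}

/-- The eccentricity of a vertex: the maximum distance to another vertex. -/
noncomputable def eccentricity {α : Type*} (G : SimpleGraph α) (v : α) : ℕ :=
  sSup {d | ∃ u, G.dist v u = d}

/-- The diameter of a graph: maximum eccentricity. -/
noncomputable def graphDiam {α : Type*} (G : SimpleGraph α) : ℕ :=
  sSup {d | ∃ v, eccentricity G v = d}

/-- The radius of a graph: minimum eccentricity. -/
noncomputable def graphRadius {α : Type*} (G : SimpleGraph α) : ℕ :=
  sInf {d | ∃ v, eccentricity G v = d}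

/-- The interval `I[x,y]`: vertices lying on some shortest `x`–`y` path. -/
def interval {α : Type*} (G : SimpleGraph α) (x y : α) : Set α :=
  {w | G.dist x w + G.dist w y = G.dist x y}

/-- A graph is adjacency `k`-resolved if for every pair of adjacent vertices
`x, y` there is a vertex `w` with `d(y,w) ≥ k` and `x ∈ I[y,w]`, or
`d(x,w) ≥ k` and `y ∈ I[x,w]`. -/
def AdjKResolved {α : Type*} (G : SimpleGraph α) (k : ℕ) : Prop :=
  ∀ x y : α, G.Adj x y →
    ∃ w : α, (k ≤ G.dist y w ∧ x ∈ interval G y w) ∨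
      (k ≤ G.dist x w ∧ y ∈ interval G x w)

/-- The true twin equivalence relation: `u ≈ v` iff `N[u] = N[v]`. -/
def trueTwinSetoid {α : Type*} (G : SimpleGraph α) : Setoid α where
  r u v := insert u (G.neighborSet u) = insert v (G.neighborSet v)
  iseqv := ⟨fun _ => rfl, Eq.symm, Eq.trans⟩

section StrongDist
variable {α β : Type*} {G : SimpleGraph α} {H : SimpleGraph β}

lemma strong_walk_proj (hG : G.Connected) (hH : H.Connected) {x y : α × β}
    (p : (strongProd G H).Walk x y) :
    G.dist x.1 y.1 ≤ p.length ∧ H.dist x.2 y.2 ≤ p.length := by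
  induction p with
  | nil => simp
  | @cons a w c h p ih =>
    constructor
    · rcases h with ⟨h1, _⟩ | ⟨_, h1⟩ | ⟨h1, _⟩
      · show G.dist a.1 c.1 ≤ p.length + 1; rw [h1]; exact le_trans ih.1 (Nat.le_succ _)
      · calc G.dist a.1 c.1 ≤ G.dist a.1 w.1 + G.dist w.1 c.1 := hG.dist_triangle
          _ ≤ 1 + p.length := by
              have : G.dist a.1 w.1 ≤ 1 := by
                rw [← SimpleGraph.dist_eq_one_iff_adj.mpr h1]
              exact Nat.add_le_add this ih.1
          _ = p.length + 1 := Nat.add_comm _ _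
      · calc G.dist a.1 c.1 ≤ G.dist a.1 w.1 + G.dist w.1 c.1 := hG.dist_triangle
          _ ≤ 1 + p.length :=
              Nat.add_le_add (le_of_eq (SimpleGraph.dist_eq_one_iff_adj.mpr h1)) ih.1
          _ = p.length + 1 := Nat.add_comm _ _
    · rcases h with ⟨_, h1⟩ | ⟨h1, _⟩ | ⟨_, h1⟩
      · calc H.dist a.2 c.2 ≤ H.dist a.2 w.2 + H.dist w.2 c.2 := hH.dist_triangle
          _ ≤ 1 + p.length :=
              Nat.add_le_add (le_of_eq (SimpleGraph.dist_eq_one_iff_adj.mpr h1)) ih.2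
          _ = p.length + 1 := Nat.add_comm _ _
      · show H.dist a.2 c.2 ≤ p.length + 1; rw [h1]; exact le_trans ih.2 (Nat.le_succ _)
      · calc H.dist a.2 c.2 ≤ H.dist a.2 w.2 + H.dist w.2 c.2 := hH.dist_triangle
          _ ≤ 1 + p.length :=
              Nat.add_le_add (le_of_eq (SimpleGraph.dist_eq_one_iff_adj.mpr h1)) ih.2
          _ = p.length + 1 := Nat.add_comm _ _

lemma strong_walk_vert {a : α} {b d : β} (q : H.Walk b d) :
    ∃ w : (strongProd G H).Walk (a, b) (a, d), w.length = q.length := by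
  induction q with
  | nil => exact ⟨Walk.nil, rfl⟩
  | @cons b₁ b₂ d h q ih =>
    obtain ⟨w, hw⟩ := ih
    exact ⟨Walk.cons (show (strongProd G H).Adj (a, b₁) (a, b₂) from Or.inl ⟨rfl, h⟩) w,
      by simp [hw]⟩

lemma strong_walk_horiz {a c : α} {b : β} (p : G.Walk a c) :
    ∃ w : (strongProd G H).Walk (a, b) (c, b), w.length = p.length := by
  induction p with
  | nil => exact ⟨Walk.nil, rfl⟩
  | @cons a₁ a₂ c h p ih =>
    obtain ⟨w, hw⟩ := ih
    exact ⟨Walk.cons (show (strongProd G H).Adj (a₁, b) (a₂, b) from Or.inr (Or.inl ⟨rfl, h⟩)) w,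
      by simp [hw]⟩

theorem strong_walk_mk : ∀ {a c : α} {b d : β} (p : G.Walk a c) (q : H.Walk b d),
    ∃ w : (strongProd G H).Walk (a, b) (c, d), w.length = max p.length q.length
  | a, _, _, _, Walk.nil, q => by
    obtain ⟨w, hw⟩ := strong_walk_vert (G := G) (a := a) q
    exact ⟨w, by simp [hw]⟩
  | _, _, b, _, Walk.cons h p, Walk.nil => by
    obtain ⟨w, hw⟩ := strong_walk_horiz (H := H) (b := b) (Walk.cons h p)
    exact ⟨w, by simp [hw]⟩
  | _, _, _, _, @Walk.cons _ _ a₁ a₂ c h p, @Walk.cons _ _ b₁ b₂ d h' q => by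
    obtain ⟨w, hw⟩ := strong_walk_mk p q
    refine ⟨Walk.cons (show (strongProd G H).Adj (a₁, b₁) (a₂, b₂) from
      Or.inr (Or.inr ⟨h, h'⟩)) w, ?_⟩
    simp [hw, Nat.succ_max_succ]

theorem strongProd_dist (hG : G.Connected) (hH : H.Connected) (x y : α × β) :
    (strongProd G H).dist x y = max (G.dist x.1 y.1) (H.dist x.2 y.2) := by
  obtain ⟨p, hp⟩ := hG.exists_walk_length_eq_dist x.1 y.1
  obtain ⟨q, hq⟩ := hH.exists_walk_length_eq_dist x.2 y.2
  obtain ⟨w, hw⟩ := strong_walk_mk p q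
  have hw' : (strongProd G H).Walk (x.1, x.2) (y.1, y.2) := w
  apply le_antisymm
  · have hle := SimpleGraph.dist_le w
    rw [hw, hp, hq] at hle
    exact hle
  · have hreach : (strongProd G H).Reachable x y := by
      refine ⟨?_⟩
      have : (x.1, x.2) = x := Prod.mk.eta
      rw [← Prod.mk.eta (p := x), ← Prod.mk.eta (p := y)]
      exact w
    obtain ⟨w₂, hw₂⟩ := hreach.exists_walk_length_eq_dist
    have h2 := strong_walk_proj hG hH w₂
    rw [hw₂] at h2
    exact max_le h2.1 h2.2

theorem strongProd_connected (hG : G.Connected) (hH : H.Connected) :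
    (strongProd G H).Connected := by
  have hne : Nonempty (α × β) := ⟨(hG.nonempty.some, hH.nonempty.some)⟩
  rw [connected_iff]
  refine ⟨fun x y => ?_, hne⟩
  obtain ⟨p, _⟩ := hG.exists_walk_length_eq_dist x.1 y.1
  obtain ⟨q, _⟩ := hH.exists_walk_length_eq_dist x.2 y.2
  obtain ⟨w, _⟩ := strong_walk_mk p q
  rw [← Prod.mk.eta (p := x), ← Prod.mk.eta (p := y)]
  exact ⟨w⟩

end StrongDist

section Diam
variable {α : Type*} [Fintype α] (G : SimpleGraph α)

lemma ecc_set_eq (v : α) : {d | ∃ u, G.dist v u = d} = Set.range (G.dist v) := by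
  ext d; simp [eq_comm, Set.mem_setOf_eq]

lemma ecc_bddAbove (v : α) : BddAbove {d | ∃ u, G.dist v u = d} := by
  rw [ecc_set_eq]
  exact (Set.finite_range _).bddAbove

lemma dist_le_ecc (v u : α) : G.dist v u ≤ eccentricity G v :=
  le_csSup (ecc_bddAbove G v) ⟨u, rfl⟩

lemma exists_ecc (v : α) : ∃ u, G.dist v u = eccentricity G v := by
  have h1 : {d | ∃ u, G.dist v u = d}.Nonempty := ⟨0, v, by simp⟩
  exact Nat.sSup_mem h1 (ecc_bddAbove G v)

lemma diam_set_eq : {d | ∃ v, eccentricity G v = d} = Set.range (eccentricity G) := by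
  ext d; simp [eq_comm, Set.mem_setOf_eq]

lemma diam_bddAbove : BddAbove {d | ∃ v, eccentricity G v = d} := by
  rw [diam_set_eq]
  exact (Set.finite_range _).bddAbove

lemma ecc_le_diam (v : α) : eccentricity G v ≤ graphDiam G :=
  le_csSup (diam_bddAbove G) ⟨v, rfl⟩

lemma dist_le_diam (u v : α) : G.dist u v ≤ graphDiam G :=
  le_trans (dist_le_ecc G u v) (ecc_le_diam G u)

lemma exists_diam [Nonempty α] : ∃ p q, G.dist p q = graphDiam G := by
  have h1 : {d | ∃ v, eccentricity G v = d}.Nonempty :=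
    ⟨eccentricity G Classical.ofNonempty, Classical.ofNonempty, rfl⟩
  obtain ⟨p, hp⟩ := Nat.sSup_mem h1 (diam_bddAbove G)
  obtain ⟨q, hq⟩ := exists_ecc G p
  exact ⟨p, q, by rw [hq, hp]; rfl⟩

lemma one_le_diam (hG : G.Connected) (hcard : 2 ≤ Fintype.card α) :
    1 ≤ graphDiam G := by
  obtain ⟨u, v, huv⟩ := Fintype.exists_pair_of_one_lt_card hcard
  calc 1 ≤ G.dist u v := hG.pos_dist_of_ne huv
    _ ≤ graphDiam G := dist_le_diam G u v

lemma adj_dist_le (hG : G.Connected) {u v : α} (h : G.Adj u v) (b : α) :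
    G.dist u b ≤ G.dist v b + 1 := by
  calc G.dist u b ≤ G.dist u v + G.dist v b := hG.dist_triangle
    _ = 1 + G.dist v b := by rw [SimpleGraph.dist_eq_one_iff_adj.mpr h]
    _ = G.dist v b + 1 := Nat.add_comm _ _

end Diam

open Fin.CommRing

section Cycle
variable {n : ℕ}

lemma cycle_conn : (cycleGraph (n+3)).Connected := cycleGraph_connected (n := n+2)

lemma cycle_adj_succ (x : Fin (n+3)) : (cycleGraph (n+3)).Adj x (x+1) := by
  have : n + 3 = (n+1) + 2 := by ring
  rw [cycleGraph_adj']
  right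
  simp

lemma cycle_dist_add (a : Fin (n+3)) (m : ℕ) :
    (cycleGraph (n+3)).dist a (a + (m : Fin (n+3))) ≤ m := by
  induction m with
  | zero => simp
  | succ m ih =>
    have hadj : (cycleGraph (n+3)).Adj (a + (m : Fin (n+3))) (a + ((m+1 : ℕ) : Fin (n+3))) := by
      have : ((m+1 : ℕ) : Fin (n+3)) = (m : Fin (n+3)) + 1 := by push_cast; ring
      rw [this, ← add_assoc]
      exact cycle_adj_succ _
    calc (cycleGraph (n+3)).dist a (a + ((m+1:ℕ) : Fin (n+3)))
        ≤ (cycleGraph (n+3)).dist a (a + (m : Fin (n+3))) +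
          (cycleGraph (n+3)).dist (a + (m : Fin (n+3))) (a + ((m+1:ℕ) : Fin (n+3))) :=
          cycle_conn.dist_triangle
      _ ≤ m + 1 := by
          have h2 : (cycleGraph (n+3)).dist (a + (m : Fin (n+3))) (a + ((m+1:ℕ) : Fin (n+3))) = 1 :=
            SimpleGraph.dist_eq_one_iff_adj.mpr hadj
          rw [h2]; exact Nat.add_le_add ih le_rfl

lemma cycle_dist_sub (a : Fin (n+3)) (m : ℕ) :
    (cycleGraph (n+3)).dist a (a - (m : Fin (n+3))) ≤ m := by
  induction m with
  | zero => simp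
  | succ m ih =>
    have hadj : (cycleGraph (n+3)).Adj (a - ((m+1 : ℕ) : Fin (n+3))) (a - (m : Fin (n+3))) := by
      have : a - (m : Fin (n+3)) = (a - ((m+1 : ℕ) : Fin (n+3))) + 1 := by push_cast; ring
      rw [this]
      exact cycle_adj_succ _
    calc (cycleGraph (n+3)).dist a (a - ((m+1:ℕ) : Fin (n+3)))
        ≤ (cycleGraph (n+3)).dist a (a - (m : Fin (n+3))) +
          (cycleGraph (n+3)).dist (a - (m : Fin (n+3))) (a - ((m+1:ℕ) : Fin (n+3))) :=
          cycle_conn.dist_triangle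
      _ ≤ m + 1 := by
          have h2 : (cycleGraph (n+3)).dist (a - (m : Fin (n+3))) (a - ((m+1:ℕ) : Fin (n+3))) = 1 :=
            SimpleGraph.dist_eq_one_iff_adj.mpr hadj.symm
          rw [h2]; exact Nat.add_le_add ih le_rfl

lemma cycle_dist_rep : ∀ (r : ℕ) (a i : Fin (n+3)), (cycleGraph (n+3)).dist a i = r →
    i = a + (r : Fin (n+3)) ∨ i = a - (r : Fin (n+3)) := by
  intro r
  induction r using Nat.strong_induction_on with
  | _ r ih =>
    intro a i hr
    rcases Nat.eq_zero_or_pos r with h0 | hpos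
    · subst h0
      left
      have : i = a := (cycle_conn.dist_eq_zero_iff.mp (by rw [hr])).symm
      simp [this]
    · -- find a neighbor of i closer to a
      obtain ⟨w, hw⟩ := cycle_conn.exists_walk_length_eq_dist i a
      rw [SimpleGraph.dist_comm] at hw
      cases w with
      | nil =>
        exfalso
        rw [hr] at hw; simp at hw; omega
      | @cons _ j _ hadj p =>
        have hplen : p.length = r - 1 := by
          have h1 := hw
          simp only [Walk.length_cons] at h1
          omega
        have hdj : (cycleGraph (n+3)).dist a j = r - 1 := by
          have h1 : (cycleGraph (n+3)).dist a j ≤ r - 1 := by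
            rw [SimpleGraph.dist_comm]
            have h2 := SimpleGraph.dist_le p
            omega
          have h2 : r ≤ (cycleGraph (n+3)).dist a j + 1 := by
            have h3 := adj_dist_le _ cycle_conn hadj a
            rw [SimpleGraph.dist_comm (u := i) (v := a), SimpleGraph.dist_comm (u := j) (v := a)] at h3
            omega
          omega
        have hij : i = j + 1 ∨ i = j - 1 := by
          rcases cycleGraph_adj'.mp hadj with h | h
          · left
            have h1 : i - j = 1 := by
              have h2 : (i - j) = (((i - j).val : ℕ) : Fin (n+3)) := by simp
              rw [h2, h]; rfl
            have h3 := sub_eq_iff_eq_add.mp h1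
            rw [h3]; ring
          · right
            have h1 : j - i = 1 := by
              have h2 : (j - i) = (((j - i).val : ℕ) : Fin (n+3)) := by simp
              rw [h2, h]; rfl
            have h3 := sub_eq_iff_eq_add.mp h1
            rw [h3]; ring
        have hc1 : ((r-1:ℕ) : Fin (n+3)) + 1 = ((r:ℕ) : Fin (n+3)) := by
          rw [← Nat.cast_add_one, Nat.sub_add_cancel hpos]
        have hj := ih (r-1) (by omega) a j hdj
        rcases Nat.lt_or_ge r 2 with hr1 | hr2
        · -- r = 1
          have hr1' : r = 1 := by omega
          subst hr1'
          simp only [Nat.sub_self, Nat.cast_zero, add_zero, sub_zero] at hj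
          rcases hj with rfl | rfl
          · rcases hij with rfl | rfl
            · left; norm_num
            · right; norm_num
          · rcases hij with rfl | rfl
            · left; norm_num
            · right; norm_num
        · -- r ≥ 2
          have hc2 : ((r-2:ℕ) : Fin (n+3)) + 1 = ((r-1:ℕ) : Fin (n+3)) := by
            rw [← Nat.cast_add_one]
            congr 1
            omega
          rcases hj with rfl | rfl
          · rcases hij with rfl | rfl
            · left; rw [← hc1]; ring
            · -- i = a + (r-1) - 1 = a + (r-2): contradiction
              exfalso
              have h4 : a + ((r-1:ℕ) : Fin (n+3)) - 1 = a + ((r-2:ℕ) : Fin (n+3)) := by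
                rw [← hc2]; ring
              have h5 := cycle_dist_add a (r-2)
              rw [← h4] at h5
              omega
          · rcases hij with rfl | rfl
            · exfalso
              have h4 : a - ((r-1:ℕ) : Fin (n+3)) + 1 = a - ((r-2:ℕ) : Fin (n+3)) := by
                rw [← hc2]; ring
              have h5 := cycle_dist_sub a (r-2)
              rw [← h4] at h5
              omega
            · right; rw [← hc1]; ring_nf

end Cycle

open Finset in
lemma cycle_ball_card (a : Fin (n+3)) (R : ℕ) :
    (Finset.univ.filter fun i => (cycleGraph (n+3)).dist a i ≤ R).card ≤ 2*R + 1 := by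
  classical
  have hsub : (Finset.univ.filter fun i => (cycleGraph (n+3)).dist a i ≤ R) ⊆
      ((Finset.range (R+1)).image (fun m : ℕ => a + (m : Fin (n+3)))) ∪
      ((Finset.range R).image (fun m : ℕ => a - ((m+1 : ℕ) : Fin (n+3)))) := by
    intro i hi
    rw [Finset.mem_filter] at hi
    obtain ⟨-, hile⟩ := hi
    rcases cycle_dist_rep ((cycleGraph (n+3)).dist a i) a i rfl with hrep | hrep
    · apply Finset.mem_union_left
      exact Finset.mem_image.mpr ⟨_, Finset.mem_range.mpr (by omega), hrep.symm⟩
    · rcases Nat.eq_zero_or_pos ((cycleGraph (n+3)).dist a i) with h0 | hpos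
      · apply Finset.mem_union_left
        refine Finset.mem_image.mpr ⟨0, Finset.mem_range.mpr (by omega), ?_⟩
        rw [h0] at hrep
        simp at hrep ⊢
        omega
      · apply Finset.mem_union_right
        refine Finset.mem_image.mpr ⟨(cycleGraph (n+3)).dist a i - 1,
          Finset.mem_range.mpr (by omega), ?_⟩
        rw [Nat.sub_add_cancel hpos]
        exact hrep.symm
  calc (Finset.univ.filter fun i => (cycleGraph (n+3)).dist a i ≤ R).card
      ≤ _ := Finset.card_le_card hsub
    _ ≤ ((Finset.range (R+1)).image (fun m : ℕ => a + (m : Fin (n+3)))).card +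
        ((Finset.range R).image (fun m : ℕ => a - ((m+1 : ℕ) : Fin (n+3)))).card :=
        Finset.card_union_le _ _
    _ ≤ (R+1) + R := by
        gcongr <;> exact le_trans (Finset.card_image_le) (by simp)
    _ = 2*R + 1 := by ring

lemma cycle_zero_card (a : Fin (n+3)) :
    (Finset.univ.filter fun i => (cycleGraph (n+3)).dist a i = 0).card ≤ 1 := by
  classical
  have hsub : (Finset.univ.filter fun i => (cycleGraph (n+3)).dist a i = 0) ⊆ {a} := by
    intro i hi
    rw [Finset.mem_filter] at hi
    have := (cycle_conn.dist_eq_zero_iff.mp hi.2).symm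
    simp [this]
  calc _ ≤ ({a} : Finset (Fin (n+3))).card := Finset.card_le_card hsub
    _ = 1 := Finset.card_singleton a

lemma exists_adj_of_conn {α : Type*} [Fintype α] (G : SimpleGraph α) (hG : G.Connected)
    (hcard : 2 ≤ Fintype.card α) (b : α) : ∃ w, G.Adj b w := by
  have : Nontrivial α := Fintype.one_lt_card_iff_nontrivial.mp hcard
  obtain ⟨v, hv⟩ := exists_ne b
  obtain ⟨p, hp⟩ := hG.exists_walk_length_eq_dist b v
  cases p with
  | nil => exact absurd rfl hv.symm
  | cons h q => exact ⟨_, h⟩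

theorem main_count {α : Type*} [Fintype α] (G : SimpleGraph α) (hG : G.Connected)
    (hcard : 2 ≤ Fintype.card α) {n : ℕ}
    (S : Finset (Fin (n+3) × α))
    (hgen : IsLocalMetricGenerator (strongProd (cycleGraph (n+3)) G) ↑S) :
    n + 3 ≤ S.card * graphDiam G := by
  classical
  set D := graphDiam G with hD
  have hD1 : 1 ≤ D := one_le_diam G hG hcard
  -- weight function
  set w : Fin (n+3) → Fin (n+3) × α → ℕ := fun i s =>
    (if (cycleGraph (n+3)).dist i s.1 ≤ D - 1 then 1 else 0) +
    (if (cycleGraph (n+3)).dist i s.1 = 0 then 1 else 0) with hw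
  -- a far element of S does not distinguish anything in column i
  have hfar : ∀ (i : Fin (n+3)) (s : Fin (n+3) × α), D ≤ (cycleGraph (n+3)).dist i s.1 →
      ∀ u v : α, (strongProd (cycleGraph (n+3)) G).dist (i, u) s =
        (strongProd (cycleGraph (n+3)) G).dist (i, v) s := by
    intro i s hsfar u v
    rw [strongProd_dist cycle_conn hG, strongProd_dist cycle_conn hG]
    simp only
    have h1 : G.dist u s.2 ≤ D := dist_le_diam G u s.2
    have h2 : G.dist v s.2 ≤ D := dist_le_diam G v s.2
    rw [max_eq_left (le_trans h1 hsfar), max_eq_left (le_trans h2 hsfar)]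
  -- per-column bound
  have key : ∀ i : Fin (n+3), 2 ≤ ∑ s ∈ S, w i s := by
    intro i
    set A := S.filter (fun s => (cycleGraph (n+3)).dist i s.1 ≤ D - 1) with hA
    have hAmem : ∀ s ∈ S, s ∉ A → D ≤ (cycleGraph (n+3)).dist i s.1 := by
      intro s hsS hsA
      rw [hA, Finset.mem_filter] at hsA
      push_neg at hsA
      have := hsA hsS
      omega
    rcases Nat.lt_or_ge A.card 2 with hball | hball
    · rcases Nat.lt_or_ge A.card 1 with h0 | h1
      · -- A empty : contradiction
        exfalso
        have hAe : A = ∅ := Finset.card_eq_zero.mp (by omega)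
        obtain ⟨u₀⟩ := hG.nonempty
        obtain ⟨v₀, huv⟩ := exists_adj_of_conn G hG hcard u₀
        obtain ⟨s, hs, hne⟩ := hgen (i, u₀) (i, v₀) (Or.inl ⟨rfl, huv⟩)
        rw [Finset.mem_coe] at hs
        have hnotA : s ∉ A := by rw [hAe]; exact Finset.notMem_empty s
        exact hne (hfar i s (hAmem s hs hnotA) u₀ v₀)
      · -- A a singleton {s₀}
        have hA1 : A.card = 1 := by omega
        obtain ⟨s₀, hs₀⟩ := Finset.card_eq_one.mp hA1
        have hs₀A : s₀ ∈ A := by rw [hs₀]; exact Finset.mem_singleton_self s₀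
        have hs₀S : s₀ ∈ S := Finset.mem_of_mem_filter s₀ hs₀A
        by_cases h00 : (cycleGraph (n+3)).dist i s₀.1 = 0
        · -- weight of s₀ alone is 2
          calc 2 = w i s₀ := by
                simp [hw, h00, cycle_conn.dist_eq_zero_iff.mp h00, SimpleGraph.dist_self]
            _ ≤ ∑ s ∈ S, w i s :=
                Finset.single_le_sum (fun s _ => Nat.zero_le (w i s)) hs₀S
        · -- contradiction : the pair ((i,b₀),(i,nbr)) is unresolved
          exfalso
          obtain ⟨w₀, hw₀⟩ := exists_adj_of_conn G hG hcard s₀.2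
          obtain ⟨s, hs, hne⟩ := hgen (i, s₀.2) (i, w₀) (Or.inl ⟨rfl, hw₀⟩)
          rw [Finset.mem_coe] at hs
          by_cases hsA : s ∈ A
          · have hss₀ : s = s₀ := by rw [hs₀] at hsA; exact Finset.mem_singleton.mp hsA
            subst hss₀
            apply hne
            rw [strongProd_dist cycle_conn hG, strongProd_dist cycle_conn hG]
            simp only
            rw [SimpleGraph.dist_self, SimpleGraph.dist_eq_one_iff_adj.mpr hw₀.symm]
            rw [max_eq_left (Nat.zero_le _), max_eq_left (by omega : 1 ≤ (cycleGraph (n+3)).dist i s.1)]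
          · exact hne (hfar i s (hAmem s hs hsA) s₀.2 w₀)
    · -- two distinct near elements
      obtain ⟨s₁, hs₁, s₂, hs₂, hne12⟩ := Finset.one_lt_card.mp hball
      have hsub : ({s₁, s₂} : Finset (Fin (n+3) × α)) ⊆ S := by
        intro x hx
        rcases Finset.mem_insert.mp hx with rfl | hx2
        · exact Finset.mem_of_mem_filter _ hs₁
        · rw [Finset.mem_singleton.mp hx2]
          exact Finset.mem_of_mem_filter _ hs₂
      have hw1 : 1 ≤ w i s₁ := by
        rw [hw]
        have := (Finset.mem_filter.mp hs₁).2
        simp only [if_pos this]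
        omega
      have hw2 : 1 ≤ w i s₂ := by
        rw [hw]
        have := (Finset.mem_filter.mp hs₂).2
        simp only [if_pos this]
        omega
      calc 2 ≤ w i s₁ + w i s₂ := by omega
        _ = ∑ s ∈ ({s₁, s₂} : Finset (Fin (n+3) × α)), w i s :=
            (Finset.sum_pair hne12).symm
        _ ≤ ∑ s ∈ S, w i s := Finset.sum_le_sum_of_subset hsub
  -- per-element bound
  have perS : ∀ s ∈ S, ∑ i : Fin (n+3), w i s ≤ 2 * D := by
    intro s _
    have hsplit : ∑ i : Fin (n+3), w i s =
        (Finset.univ.filter fun i => (cycleGraph (n+3)).dist i s.1 ≤ D - 1).card +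
        (Finset.univ.filter fun i => (cycleGraph (n+3)).dist i s.1 = 0).card := by
      rw [hw, Finset.sum_add_distrib]
      congr 1 <;> rw [Finset.card_filter] <;> rfl
    have hball : (Finset.univ.filter fun i => (cycleGraph (n+3)).dist i s.1 ≤ D - 1).card
        ≤ 2*(D-1) + 1 := by
      have hcongr : (Finset.univ.filter fun i => (cycleGraph (n+3)).dist i s.1 ≤ D - 1) =
          (Finset.univ.filter fun i => (cycleGraph (n+3)).dist s.1 i ≤ D - 1) := by
        apply Finset.filter_congr
        intro i _
        rw [SimpleGraph.dist_comm]
      rw [hcongr]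
      exact cycle_ball_card s.1 (D-1)
    have hzero : (Finset.univ.filter fun i => (cycleGraph (n+3)).dist i s.1 = 0).card ≤ 1 := by
      have hcongr : (Finset.univ.filter fun i => (cycleGraph (n+3)).dist i s.1 = 0) =
          (Finset.univ.filter fun i => (cycleGraph (n+3)).dist s.1 i = 0) := by
        apply Finset.filter_congr
        intro i _
        rw [SimpleGraph.dist_comm]
      rw [hcongr]
      exact cycle_zero_card s.1
    omega
  -- total count
  have total : 2 * (n+3) ≤ S.card * (2 * D) := by
    calc 2 * (n+3) = ∑ _i : Fin (n+3), 2 := by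
          rw [Finset.sum_const, Finset.card_univ, Fintype.card_fin, smul_eq_mul]; ring
      _ ≤ ∑ i : Fin (n+3), ∑ s ∈ S, w i s := Finset.sum_le_sum fun i _ => key i
      _ = ∑ s ∈ S, ∑ i : Fin (n+3), w i s := Finset.sum_comm
      _ ≤ ∑ _s ∈ S, 2 * D := Finset.sum_le_sum perS
      _ = S.card * (2 * D) := by rw [Finset.sum_const, smul_eq_mul]
  have h2 : 2 * (n+3) ≤ 2 * (S.card * D) := by
    calc 2 * (n+3) ≤ S.card * (2*D) := total
      _ = 2 * (S.card * D) := by ring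
  omega

/-- `dim_l(C_t ⊠ G) ≥ ⌈t/D(G)⌉`. -/
theorem stmt18 {α : Type*} [Fintype α] (G : SimpleGraph α) (hG : G.Connected)
    (hn : 2 ≤ Fintype.card α) (t : ℕ) (ht : 3 ≤ t) :
    ⌈(t : ℚ) / (graphDiam G : ℚ)⌉ ≤
      (localMetricDim (strongProd (SimpleGraph.cycleGraph t) G) : ℤ) := by
  classical
  obtain ⟨n, rfl⟩ : ∃ n, t = n + 3 := ⟨t - 3, by omega⟩
  set D := graphDiam G with hD
  have hD1 : 1 ≤ D := one_le_diam G hG hn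
  have huniv : IsLocalMetricGenerator (strongProd (cycleGraph (n+3)) G)
      ↑(Finset.univ : Finset (Fin (n+3) × α)) := by
    intro u v huv
    refine ⟨u, by simp, ?_⟩
    rw [SimpleGraph.dist_self]
    intro h
    have h2 := SimpleGraph.dist_ne_zero_iff_ne_and_reachable.mpr
      ⟨(Adj.ne huv).symm, (Adj.reachable huv).symm⟩
    exact h2 h.symm
  have hne : {m | ∃ S : Finset (Fin (n+3) × α), S.card = m ∧
      IsLocalMetricGenerator (strongProd (cycleGraph (n+3)) G) ↑S}.Nonempty :=
    ⟨_, Finset.univ, rfl, huniv⟩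
  obtain ⟨S₀, hcard₀, hgen₀⟩ := Nat.sInf_mem hne
  have hmain := main_count G hG hn S₀ hgen₀
  rw [hcard₀] at hmain
  set k := localMetricDim (strongProd (cycleGraph (n+3)) G) with hk
  have hfin : ((n+3 : ℕ) : ℚ) / (D : ℚ) ≤ (k : ℚ) := by
    rw [div_le_iff₀ (by exact_mod_cast hD1 : (0:ℚ) < D)]
    exact_mod_cast hmain
  rw [Int.ceil_le]
  push_cast at hfin ⊢
  exact hfin
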